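/- arXiv:2108.06312 — 3 statements merged into one kernel-verified Lean document; each statement's English description precedes it below -/
import Mathlib

section
/- Let A and B be bounded self-adjoint operators on a complex Hilbert space, let C, K, L ≥ 0, and set ε := max((4K)^{1/4}, 4L), assumed strictly positive. Suppose that for every λ in the spectrum of A, writing z = λ + iε, one has ‖(z·1 − A)^{−1}‖ ≤ C·‖(z·1 − B)^{−1}‖ + K/ε⁵ + L/ε². Then sp(A) ⊆ sp(B) + [−2Cε, 2Cε], i.e., every point of the spectrum of A is within distance 2Cε of the spectrum of B. -/
noncomputable section

lemma resolvent_eq_cfc_aux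
    {H : Type*} [NormedAddCommGroup H] [InnerProductSpace ℂ H] [CompleteSpace H]
    (T : H →L[ℂ] H) (hT : IsSelfAdjoint T) (z' : ℂ) (hz' : z'.im ≠ 0) :
    Ring.inverse (z' • (1 : H →L[ℂ] H) - T) =
      cfc (fun x : ℂ => (z' - x)⁻¹) T := by
  have hst : IsStarNormal T := hT.isStarNormal
  have hne : ∀ x ∈ spectrum ℂ T, z' - x ≠ 0 := by
    intro x hx h
    rw [sub_eq_zero] at h
    exact hz' (h ▸ hT.im_eq_zero_of_mem_spectrum hx)
  have hcont : ContinuousOn (fun x : ℂ => (z' - x)⁻¹) (spectrum ℂ T) :=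
    ((continuous_const.sub continuous_id).continuousOn).inv₀ hne
  have h1 : cfc (fun x : ℂ => z' - x) T = z' • (1 : H →L[ℂ] H) - T := by
    rw [cfc_sub (fun x : ℂ => z') (fun x : ℂ => x) T, cfc_const z' T, cfc_id' ℂ T,
      Algebra.algebraMap_eq_smul_one]
  have hmul1 : cfc (fun x : ℂ => (z' - x)⁻¹) T * cfc (fun x : ℂ => z' - x) T = 1 := by
    rw [← cfc_mul (fun x : ℂ => (z' - x)⁻¹) (fun x : ℂ => z' - x) T hcont ((continuous_const.sub continuous_id).continuousOn)]
    rw [cfc_congr (g := fun _ : ℂ => (1 : ℂ)) (fun x hx => inv_mul_cancel₀ (hne x hx))]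
    exact cfc_one ℂ T
  have hmul2 : cfc (fun x : ℂ => z' - x) T * cfc (fun x : ℂ => (z' - x)⁻¹) T = 1 := by
    rw [← cfc_mul (fun x : ℂ => z' - x) (fun x : ℂ => (z' - x)⁻¹) T ((continuous_const.sub continuous_id).continuousOn) hcont]
    rw [cfc_congr (g := fun _ : ℂ => (1 : ℂ)) (fun x hx => mul_inv_cancel₀ (hne x hx))]
    exact cfc_one ℂ T
  rw [← h1]
  let U : (H →L[ℂ] H)ˣ :=
    ⟨cfc (fun x : ℂ => z' - x) T, cfc (fun x : ℂ => (z' - x)⁻¹) T, hmul2, hmul1⟩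
  exact Ring.inverse_unit U

/-- resolvent bounds imply that the spectrum of A is contained in a
2Cε-neighborhood of the spectrum of B, for bounded self-adjoint operators. -/
theorem spectrum_inclusion_of_resolvent_bound
    {H : Type*} [NormedAddCommGroup H] [InnerProductSpace ℂ H] [CompleteSpace H]
    (A B : H →L[ℂ] H) (hA : IsSelfAdjoint A) (hB : IsSelfAdjoint B)
    (C K L : ℝ) (hC : 0 ≤ C) (hK : 0 ≤ K) (hL : 0 ≤ L)
    (ε : ℝ) (hε : ε = max ((4 * K) ^ (1 / 4 : ℝ)) (4 * L)) (hεpos : 0 < ε)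
    (hres : ∀ l ∈ spectrum ℂ A,
      ‖Ring.inverse ((l + (ε : ℂ) * Complex.I) • (1 : H →L[ℂ] H) - A)‖ ≤
        C * ‖Ring.inverse ((l + (ε : ℂ) * Complex.I) • (1 : H →L[ℂ] H) - B)‖
          + K / ε ^ 5 + L / ε ^ 2) :
    ∀ z ∈ spectrum ℂ A, ∃ w ∈ spectrum ℂ B, ∃ s : ℝ, |s| ≤ 2 * C * ε ∧ z = w + s := by
  intro z hz
  have hzim : z.im = 0 := hA.im_eq_zero_of_mem_spectrum hz
  have hzre : (z.re : ℂ) = z := (hA.mem_spectrum_eq_re hz).symm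
  have himne : (z + (ε : ℂ) * Complex.I).im ≠ 0 := by
    simp [Complex.add_im, Complex.mul_im, hzim]
    exact ne_of_gt hεpos
  -- lower bound on the resolvent of A
  have hlow : ε⁻¹ ≤ ‖Ring.inverse ((z + (ε : ℂ) * Complex.I) • (1 : H →L[ℂ] H) - A)‖ := by
    rw [resolvent_eq_cfc_aux A hA _ himne]
    have hne : ∀ x ∈ spectrum ℂ A, (z + (ε : ℂ) * Complex.I) - x ≠ 0 := by
      intro x hx h
      rw [sub_eq_zero] at h
      have := hA.im_eq_zero_of_mem_spectrum hx
      rw [← h] at this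
      simp [Complex.add_im, Complex.mul_im, hzim] at this
      exact (ne_of_gt hεpos) this
    have hcont : ContinuousOn (fun x : ℂ => ((z + (ε : ℂ) * Complex.I) - x)⁻¹) (spectrum ℂ A) :=
      ((continuous_const.sub continuous_id).continuousOn).inv₀ hne
    have h0 := norm_apply_le_norm_cfc (fun x : ℂ => ((z + (ε : ℂ) * Complex.I) - x)⁻¹) A hz
      hcont hA.isStarNormal
    have heq : ‖((z + (ε : ℂ) * Complex.I) - z)⁻¹‖ = ε⁻¹ := by
      have : (z + (ε : ℂ) * Complex.I) - z = (ε : ℂ) * Complex.I := by ring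
      rw [this, norm_inv]
      simp [abs_of_pos hεpos]
    rwa [heq] at h0
  -- bounds on the error terms
  have hK4 : K / ε ^ 5 ≤ 1 / (4 * ε) := by
    have h1 : (4 * K) ^ (1 / 4 : ℝ) ≤ ε := hε ▸ le_max_left _ _
    have h4 : 4 * K ≤ ε ^ 4 := by
      calc 4 * K = ((4 * K) ^ (1 / 4 : ℝ)) ^ (4 : ℕ) := by
            rw [← Real.rpow_natCast ((4 * K) ^ (1 / 4 : ℝ)) 4, ← Real.rpow_mul (by positivity)]
            norm_num
        _ ≤ ε ^ 4 := pow_le_pow_left₀ (Real.rpow_nonneg (by positivity) _) h1 4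
    rw [div_le_div_iff₀ (by positivity) (by positivity)]
    nlinarith [pow_pos hεpos 4, mul_le_mul_of_nonneg_right h4 hεpos.le]
  have hL4 : L / ε ^ 2 ≤ 1 / (4 * ε) := by
    have h1 : 4 * L ≤ ε := hε ▸ le_max_right _ _
    rw [div_le_div_iff₀ (by positivity) (by positivity)]
    nlinarith [mul_le_mul_of_nonneg_right h1 hεpos.le]
  have hhalf : 1 / (4 * ε) + 1 / (4 * ε) = 1 / (2 * ε) := by
    field_simp
    ring
  have hineq : ε⁻¹ ≤
      C * ‖Ring.inverse ((z + (ε : ℂ) * Complex.I) • (1 : H →L[ℂ] H) - B)‖ + 1 / (2 * ε) := by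
    have h0 := hres z hz
    linarith
  have hCpos : 0 < C := by
    rcases hC.lt_or_eq with h | h
    · exact h
    · exfalso
      rw [← h] at hineq
      rw [inv_eq_one_div, ] at hineq
      have hB0 : (0:ℝ) * ‖Ring.inverse ((z + (ε : ℂ) * Complex.I) • (1 : H →L[ℂ] H) - B)‖ = 0 := by
        ring
      rw [hB0, zero_add, div_le_div_iff₀ (by positivity) (by positivity)] at hineq
      linarith [hεpos]
  by_contra hcon
  push_neg at hcon
  -- every point of spectrum B is far from z
  have hub : ‖Ring.inverse ((z + (ε : ℂ) * Complex.I) • (1 : H →L[ℂ] H) - B)‖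
      < 1 / (2 * C * ε) := by
    rw [resolvent_eq_cfc_aux B hB _ himne]
    apply norm_cfc_lt (by positivity)
    intro x hx
    have hxre : (x.re : ℂ) = x := (hB.mem_spectrum_eq_re hx).symm
    have hzx : z = x + ((z.re - x.re : ℝ) : ℂ) := by
      push_cast
      rw [hzre, hxre]
      ring
    have hfar : 2 * C * ε < |z.re - x.re| := by
      by_contra hle
      push_neg at hle
      exact hcon x hx (z.re - x.re) hle hzx
    have hre : |z.re - x.re| ≤ ‖z + (ε : ℂ) * Complex.I - x‖ := by
      have : (z + (ε : ℂ) * Complex.I - x).re = z.re - x.re := by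
        simp [Complex.add_re, Complex.sub_re, Complex.mul_re]
      calc |z.re - x.re| = |(z + (ε : ℂ) * Complex.I - x).re| := by rw [this]
        _ ≤ ‖z + (ε : ℂ) * Complex.I - x‖ := Complex.abs_re_le_norm _
        _ = ‖z + (ε : ℂ) * Complex.I - x‖ := rfl
    have hfar2 : 2 * C * ε < ‖z + (ε : ℂ) * Complex.I - x‖ := lt_of_lt_of_le hfar hre
    rw [norm_inv, one_div]
    exact inv_strictAnti₀ (by positivity) hfar2
  have hCmul : C * (1 / (2 * C * ε)) = 1 / (2 * ε) := by
    field_simp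
  have hfin : ε⁻¹ < 1 / (2 * ε) + 1 / (2 * ε) := by
    calc ε⁻¹ ≤ C * ‖Ring.inverse ((z + (ε : ℂ) * Complex.I) • (1 : H →L[ℂ] H) - B)‖
        + 1 / (2 * ε) := hineq
      _ < C * (1 / (2 * C * ε)) + 1 / (2 * ε) := by
          have := mul_lt_mul_of_pos_left hub hCpos
          linarith
      _ = 1 / (2 * ε) + 1 / (2 * ε) := by rw [hCmul]
  have : 1 / (2 * ε) + 1 / (2 * ε) = ε⁻¹ := by
    field_simp
    norm_num
  rw [this] at hfin
  exact lt_irrefl _ hfin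
end
end

section
/- Let (A_i)_{i=1}^n and (A'_j)_{j=1}^{n'} be deterministic self-adjoint matrices in M_d(ℂ), defining the Gaussian random matrices X = Σ_{i=1}^n g_i A_i and X' = Σ_{j=1}^{n'} g'_j A'_j. Then w(X, X')⁴ ≤ v(X) σ(X) v(X') σ(X'), where w(X, X') := sup over unitary U, V, W ∈ M_d(ℂ) of ‖ Σ_{i=1}^n Σ_{j=1}^{n'} A_i U A'_j V A_i W A'_j ‖^{1/4}. -/
open Matrix

noncomputable section

/-- The ℓ²→ℓ² operator (spectral) norm of a complex matrix. -/
def opNorm {ι κ : Type*} [Fintype ι] [Fintype κ] [DecidableEq κ] (M : Matrix ι κ ℂ) : ℝ :=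
  ‖LinearMap.toContinuousLinearMap (Matrix.toEuclideanLin M)‖

/-- σ(X) = ‖Σᵢ Aᵢ²‖^{1/2}. -/
def sigmaParam {ι d : Type*} [Fintype ι] [Fintype d] [DecidableEq d]
    (A : ι → Matrix d d ℂ) : ℝ :=
  Real.sqrt (opNorm (∑ i, A i * A i))

/-- v(X) = ‖Cov(X)‖^{1/2}. -/
def vParam {ι d : Type*} [Fintype ι] [Fintype d] [DecidableEq d]
    (A : ι → Matrix d d ℂ) : ℝ :=
  Real.sqrt (sSup {x : ℝ | ∃ M : Matrix d d ℂ,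
    (Mᴴ * M).trace.re ≤ 1 ∧ x = ∑ i, ‖(A i * M).trace‖ ^ 2})

/-- The matrix alignment parameter
w(X,X') = sup_{U,V,W unitary} ‖Σᵢⱼ AᵢUA'ⱼVAᵢWA'ⱼ‖^{1/4}. -/
def wParam {ι ι' d : Type*} [Fintype ι] [Fintype ι'] [Fintype d] [DecidableEq d]
    (A : ι → Matrix d d ℂ) (A' : ι' → Matrix d d ℂ) : ℝ :=
  sSup {x : ℝ | ∃ U V W : Matrix d d ℂ,
    U ∈ Matrix.unitaryGroup d ℂ ∧ V ∈ Matrix.unitaryGroup d ℂ ∧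
    W ∈ Matrix.unitaryGroup d ℂ ∧
    x = opNorm (∑ i, ∑ j, A i * U * A' j * V * A i * W * A' j) ^ (1 / 4 : ℝ)}

section Aux
open Finset
variable {d n : ℕ}

def frsq {d : ℕ} (M : Matrix (Fin d) (Fin d) ℂ) : ℝ := ∑ a, ∑ b, ‖M a b‖ ^ 2

lemma star_mul_self_re (z : ℂ) : (star z * z).re = ‖z‖ ^ 2 := by
  rw [mul_comm, Complex.star_def, Complex.mul_conj]; simp [Complex.sq_norm]

lemma frsq_nonneg (M : Matrix (Fin d) (Fin d) ℂ) : 0 ≤ frsq M := by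
  unfold frsq; positivity

lemma trace_conjTranspose_mul_re (M : Matrix (Fin d) (Fin d) ℂ) :
    (Mᴴ * M).trace.re = frsq M := by
  simp only [trace, Matrix.mul_apply, conjTranspose_apply, diag_apply, frsq]
  rw [Complex.re_sum, Finset.sum_comm]
  congr 1; ext a; rw [Complex.re_sum]
  congr 1; ext b
  exact star_mul_self_re _

lemma frsq_smul (z : ℂ) (M : Matrix (Fin d) (Fin d) ℂ) :
    frsq (z • M) = ‖z‖ ^ 2 * frsq M := by
  simp [frsq, mul_pow, Finset.mul_sum, _root_.map_mul]

lemma abs_sum_mul_le {α : Type*} [Fintype α] (f g : α → ℂ) :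
    ‖∑ k, f k * g k‖ ≤
      Real.sqrt (∑ k, ‖f k‖ ^ 2) * Real.sqrt (∑ k, ‖g k‖ ^ 2) := by
  calc ‖∑ k, f k * g k‖ ≤ ∑ k, ‖f k‖ * ‖g k‖ := by
        refine (norm_sum_le _ _).trans ?_
        simp [_root_.map_mul]
    _ ≤ _ := Real.sum_mul_le_sqrt_mul_sqrt _ _ _

/-- Cauchy–Schwarz for |trace (A*M)|². -/
lemma abs_trace_mul_sq_le (B M : Matrix (Fin d) (Fin d) ℂ) :
    ‖(B * M).trace‖ ^ 2 ≤ frsq B * frsq M := by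
  have htr : (B * M).trace = ∑ p : Fin d × Fin d, B p.1 p.2 * M p.2 p.1 := by
    rw [Fintype.sum_prod_type]
    simp [trace, Matrix.mul_apply, diag_apply]
  rw [htr]
  have h := abs_sum_mul_le (fun p : Fin d × Fin d => B p.1 p.2) (fun p => M p.2 p.1)
  have h1 : (∑ p : Fin d × Fin d, ‖B p.1 p.2‖ ^ 2) = frsq B := by
    rw [Fintype.sum_prod_type]; rfl
  have h2 : (∑ p : Fin d × Fin d, ‖M p.2 p.1‖ ^ 2) = frsq M := by
    rw [Fintype.sum_prod_type, Finset.sum_comm]; rfl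
  rw [h1, h2] at h
  calc ‖∑ p : Fin d × Fin d, B p.1 p.2 * M p.2 p.1‖ ^ 2
      ≤ (Real.sqrt (frsq B) * Real.sqrt (frsq M)) ^ 2 := by
        apply pow_le_pow_left₀ (by positivity) h
    _ = frsq B * frsq M := by
        rw [mul_pow, Real.sq_sqrt (frsq_nonneg _), Real.sq_sqrt (frsq_nonneg _)]

section vlemmas
variable (A : Fin n → Matrix (Fin d) (Fin d) ℂ)

def vSet (A : Fin n → Matrix (Fin d) (Fin d) ℂ) : Set ℝ :=
  {x : ℝ | ∃ M : Matrix (Fin d) (Fin d) ℂ,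
    (Mᴴ * M).trace.re ≤ 1 ∧ x = ∑ i, ‖(A i * M).trace‖ ^ 2}

lemma vSet_bddAbove : BddAbove (vSet A) := by
  refine ⟨∑ i, frsq (A i), ?_⟩
  rintro x ⟨M, hM, rfl⟩
  rw [trace_conjTranspose_mul_re] at hM
  refine Finset.sum_le_sum fun i _ => ?_
  calc ‖(A i * M).trace‖ ^ 2 ≤ frsq (A i) * frsq M := abs_trace_mul_sq_le _ _
    _ ≤ frsq (A i) * 1 := by
        exact mul_le_mul_of_nonneg_left hM (frsq_nonneg _)
    _ = frsq (A i) := mul_one _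

lemma vSet_nonempty : (vSet A).Nonempty := ⟨0, 0, by simp, by simp⟩

lemma sSup_vSet_nonneg : 0 ≤ sSup (vSet A) := by
  refine Real.sSup_nonneg fun x hx => ?_
  obtain ⟨M, _, rfl⟩ := hx
  positivity

lemma vParam_sq : vParam A ^ 2 = sSup (vSet A) := Real.sq_sqrt (sSup_vSet_nonneg A)

lemma vParam_nonneg : 0 ≤ vParam A := Real.sqrt_nonneg _

/-- Lemma A: the covariance bound for arbitrary M. -/
lemma sum_abs_trace_sq_le (M : Matrix (Fin d) (Fin d) ℂ) :
    ∑ i, ‖(A i * M).trace‖ ^ 2 ≤ vParam A ^ 2 * frsq M := by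
  rw [vParam_sq]
  rcases eq_or_lt_of_le (frsq_nonneg M) with h0 | hpos
  · have hM : M = 0 := by
      ext a b
      have : ∀ a b, ‖M a b‖ ^ 2 = 0 := by
        intro a b
        have hle : ‖M a b‖ ^ 2 ≤ frsq M := by
          unfold frsq
          refine Finset.single_le_sum (f := fun a => ∑ b, ‖M a b‖ ^2) (fun i _ => by positivity) (Finset.mem_univ a) |>.trans' ?_
          exact Finset.single_le_sum (f := fun b => ‖M a b‖ ^ 2) (fun i _ => by positivity) (Finset.mem_univ b)
        nlinarith [sq_nonneg (‖M a b‖)]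
      simpa using (pow_eq_zero_iff (n := 2) (by norm_num)).mp (this a b)
    subst hM
    simp only [Matrix.mul_zero, trace_zero, map_zero, norm_zero]
    have : (∑ i : Fin n, (0:ℝ) ^ 2) = 0 := by simp
    rw [this]
    have := sSup_vSet_nonneg A
    have := frsq_nonneg (0 : Matrix (Fin d) (Fin d) ℂ)
    positivity
  · set t := Real.sqrt (frsq M) with ht
    have htpos : 0 < t := Real.sqrt_pos.mpr hpos
    set M' : Matrix (Fin d) (Fin d) ℂ := ((t⁻¹ : ℝ) : ℂ) • M with hM'
    have hfr : frsq M' = 1 := by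
      rw [hM', frsq_smul]
      simp only [Complex.norm_real, Real.norm_eq_abs]
      rw [abs_of_nonneg (by positivity)]
      rw [ht]
      rw [inv_pow, Real.sq_sqrt (frsq_nonneg M)]
      field_simp
    have hmem : (∑ i, ‖(A i * M').trace‖ ^ 2) ∈ vSet A := by
      exact ⟨M', by rw [trace_conjTranspose_mul_re, hfr], rfl⟩
    have hle := le_csSup (vSet_bddAbove A) hmem
    have hexp : ∑ i, ‖(A i * M').trace‖ ^ 2
        = (t⁻¹) ^ 2 * ∑ i, ‖(A i * M).trace‖ ^ 2 := by
      rw [Finset.mul_sum]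
      congr 1; ext i
      rw [hM', Matrix.mul_smul, trace_smul]
      simp [_root_.map_mul, mul_pow, abs_of_nonneg (le_of_lt (inv_pos.mpr htpos))]
    rw [hexp] at hle
    have ht2 : t ^ 2 = frsq M := Real.sq_sqrt (frsq_nonneg M)
    calc ∑ i, ‖(A i * M).trace‖ ^ 2
        = t ^ 2 * ((t⁻¹) ^ 2 * ∑ i, ‖(A i * M).trace‖ ^ 2) := by
          field_simp
      _ ≤ t ^ 2 * sSup (vSet A) := by
          exact mul_le_mul_of_nonneg_left hle (by positivity)
      _ = sSup (vSet A) * frsq M := by rw [ht2]; ring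

end vlemmas

/-- Lemma A': Frobenius norm of a linear combination of the Hermitian Aᵢ. -/
lemma frsq_sum_smul_le (A : Fin n → Matrix (Fin d) (Fin d) ℂ) (hA : ∀ i, (A i).IsHermitian)
    (γ : Fin n → ℂ) :
    frsq (∑ i, γ i • A i) ≤ vParam A ^ 2 * ∑ i, ‖γ i‖ ^ 2 := by
  set N := ∑ i, γ i • A i with hN
  have hNH : Nᴴ = ∑ i, (starRingEnd ℂ) (γ i) • A i := by
    rw [hN, conjTranspose_sum]
    congr 1; ext i
    rw [conjTranspose_smul, (hA i).eq]
    rfl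
  have htr : (Nᴴ * N).trace = ∑ i, (starRingEnd ℂ) (γ i) * (A i * N).trace := by
    rw [hNH, Finset.sum_mul, trace_sum]
    congr 1; ext i
    rw [smul_mul_assoc, trace_smul]
    rfl
  have h1 : frsq N ≤ ‖(Nᴴ * N).trace‖ := by
    rw [← trace_conjTranspose_mul_re]
    exact Complex.re_le_norm _
  have h2 : ‖(Nᴴ * N).trace‖
      ≤ Real.sqrt (∑ i, ‖γ i‖ ^ 2) *
        Real.sqrt (∑ i, ‖(A i * N).trace‖ ^ 2) := by
    rw [htr]
    have := abs_sum_mul_le (fun i => (starRingEnd ℂ) (γ i)) (fun i => (A i * N).trace)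
    simpa using this
  have h3 : Real.sqrt (∑ i, ‖(A i * N).trace‖ ^ 2)
      ≤ vParam A * Real.sqrt (frsq N) := by
    have := sum_abs_trace_sq_le A N
    calc Real.sqrt (∑ i, ‖(A i * N).trace‖ ^ 2)
        ≤ Real.sqrt (vParam A ^ 2 * frsq N) := Real.sqrt_le_sqrt this
      _ = vParam A * Real.sqrt (frsq N) := by
          rw [Real.sqrt_mul (by positivity), Real.sqrt_sq (vParam_nonneg A)]
  have key : frsq N ≤ (Real.sqrt (∑ i, ‖γ i‖ ^ 2) * vParam A) * Real.sqrt (frsq N) := by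
    calc frsq N ≤ _ := h1
      _ ≤ Real.sqrt (∑ i, ‖γ i‖ ^ 2) * (vParam A * Real.sqrt (frsq N)) := by
          exact h2.trans (mul_le_mul_of_nonneg_left h3 (Real.sqrt_nonneg _))
      _ = _ := by ring
  rcases eq_or_lt_of_le (frsq_nonneg N) with h0 | hpos
  · have hnn : (0:ℝ) ≤ vParam A ^ 2 * ∑ i, ‖γ i‖ ^ 2 :=
      mul_nonneg (sq_nonneg _) (Finset.sum_nonneg fun i _ => sq_nonneg _)
    linarith [h0]
  · have hSnn : (0:ℝ) ≤ ∑ i, ‖γ i‖ ^ 2 :=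
      Finset.sum_nonneg fun i _ => sq_nonneg _
    set t := Real.sqrt (frsq N) with htdef
    set c := Real.sqrt (∑ i, ‖γ i‖ ^ 2) * vParam A with hcdef
    have hsq : t * t = frsq N := Real.mul_self_sqrt (frsq_nonneg N)
    have hspos : 0 < t := Real.sqrt_pos.mpr hpos
    have h4 : t * t ≤ c * t := by rw [hsq]; exact key
    have h5 : t ≤ c := le_of_mul_le_mul_right h4 hspos
    have hcnn : 0 ≤ c := le_trans hspos.le h5
    calc frsq N = t * t := hsq.symm
      _ ≤ c * c := mul_le_mul h5 h5 hspos.le hcnn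
      _ = (Real.sqrt (∑ i, ‖γ i‖ ^ 2) * Real.sqrt (∑ i, ‖γ i‖ ^ 2))
          * (vParam A * vParam A) := by rw [hcdef]; ring
      _ = vParam A ^ 2 * ∑ i, ‖γ i‖ ^ 2 := by
          rw [Real.mul_self_sqrt hSnn]; ring

/-- norm of mulVec vs opNorm -/
lemma mulVec_norm_le (M : Matrix (Fin d) (Fin d) ℂ) (y : Fin d → ℂ) :
    Real.sqrt (∑ a, ‖(M *ᵥ y) a‖ ^ 2)
      ≤ opNorm M * Real.sqrt (∑ a, ‖y a‖ ^ 2) := by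
  set y' : EuclideanSpace ℂ (Fin d) := (WithLp.equiv 2 _).symm y with hy'
  have h1 : ‖(LinearMap.toContinuousLinearMap (Matrix.toEuclideanLin M)) y'‖
      ≤ opNorm M * ‖y'‖ := (LinearMap.toContinuousLinearMap (Matrix.toEuclideanLin M)).le_opNorm y'
  have h2 : (LinearMap.toContinuousLinearMap (Matrix.toEuclideanLin M)) y'
      = (WithLp.equiv 2 _).symm (M *ᵥ y) := by
    rw [LinearMap.coe_toContinuousLinearMap']
    rw [Matrix.toEuclideanLin_apply]
    simp [hy']
  have h3 : ‖(WithLp.equiv 2 ((Fin d) → ℂ)).symm (M *ᵥ y)‖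
      = Real.sqrt (∑ a, ‖(M *ᵥ y) a‖ ^ 2) := by
    rw [EuclideanSpace.norm_eq]
    congr 1
  have h4 : ‖y'‖ = Real.sqrt (∑ a, ‖y a‖ ^ 2) := by
    rw [hy', EuclideanSpace.norm_eq]
    congr 1
  rw [h2, h3] at h1
  rw [h4] at h1
  exact h1

lemma star_dot_self (w : Fin d → ℂ) :
    star w ⬝ᵥ w = ((∑ a, ‖w a‖ ^ 2 : ℝ) : ℂ) := by
  simp only [dotProduct, Pi.star_apply, Complex.ofReal_sum]
  congr 1; ext a
  rw [mul_comm, Complex.star_def, Complex.mul_conj]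
  simp [Complex.sq_norm]

lemma abs_star_dot_le (x w : Fin d → ℂ) :
    ‖star x ⬝ᵥ w‖ ≤
      Real.sqrt (∑ a, ‖x a‖ ^ 2) * Real.sqrt (∑ a, ‖w a‖ ^ 2) := by
  have := abs_sum_mul_le (fun a => star (x a)) w
  simpa [dotProduct, Pi.star_apply] using this

/-- opNorm upper bound from the sesquilinear form. -/
lemma opNorm_le_of_forms (M : Matrix (Fin d) (Fin d) ℂ) (C : ℝ) (hC : 0 ≤ C)
    (h : ∀ x y : Fin d → ℂ, ‖star x ⬝ᵥ (M *ᵥ y)‖ ≤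
      C * (Real.sqrt (∑ a, ‖x a‖ ^ 2) * Real.sqrt (∑ a, ‖y a‖ ^ 2))) :
    opNorm M ≤ C := by
  refine ContinuousLinearMap.opNorm_le_bound _ hC ?_
  intro y'
  set y : Fin d → ℂ := (WithLp.equiv 2 _) y' with hy
  have h2 : (LinearMap.toContinuousLinearMap (Matrix.toEuclideanLin M)) y'
      = (WithLp.equiv 2 _).symm (M *ᵥ y) := by
    rw [LinearMap.coe_toContinuousLinearMap']
    rw [Matrix.toEuclideanLin_apply]
    rfl
  set w : Fin d → ℂ := M *ᵥ y with hw
  have h3 : ‖(LinearMap.toContinuousLinearMap (Matrix.toEuclideanLin M)) y'‖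
      = Real.sqrt (∑ a, ‖w a‖ ^ 2) := by
    rw [h2, EuclideanSpace.norm_eq]
    congr 1
  have h4 : ‖y'‖ = Real.sqrt (∑ a, ‖y a‖ ^ 2) := by
    rw [EuclideanSpace.norm_eq]
    congr 1
  rw [h3, h4]
  set t := Real.sqrt (∑ a, ‖w a‖ ^ 2) with htdef
  have htnn : 0 ≤ t := Real.sqrt_nonneg _
  rcases eq_or_lt_of_le htnn with h0 | hpos
  · have hnn : (0:ℝ) ≤ C * Real.sqrt (∑ a, ‖y a‖ ^ 2) :=
      mul_nonneg hC (Real.sqrt_nonneg _)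
    linarith [h0]
  · have hdot : ‖star w ⬝ᵥ w‖ = t * t := by
      rw [star_dot_self]
      rw [Complex.norm_real, Real.norm_eq_abs,
        abs_of_nonneg (Finset.sum_nonneg fun _ _ => sq_nonneg _)]
      rw [htdef, Real.mul_self_sqrt (Finset.sum_nonneg fun _ _ => sq_nonneg _)]
    have := h w y
    rw [← hw, hdot] at this
    have ht : t * t ≤ (C * Real.sqrt (∑ a, ‖y a‖ ^ 2)) * t := by
      calc t * t ≤ C * (t * Real.sqrt (∑ a, ‖y a‖ ^ 2)) := this
        _ = (C * Real.sqrt (∑ a, ‖y a‖ ^ 2)) * t := by ring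
    exact le_of_mul_le_mul_right ht hpos

/-- σ bound. -/
lemma sum_mulVec_sq_le (A : Fin n → Matrix (Fin d) (Fin d) ℂ) (hA : ∀ i, (A i).IsHermitian)
    (x : Fin d → ℂ) :
    ∑ i, ∑ a, ‖(A i *ᵥ x) a‖ ^ 2
      ≤ sigmaParam A ^ 2 * ∑ a, ‖x a‖ ^ 2 := by
  have hsig : sigmaParam A ^ 2 = opNorm (∑ i, A i * A i) :=
    Real.sq_sqrt (norm_nonneg _)
  set B : Matrix (Fin d) (Fin d) ℂ := ∑ i, A i * A i with hB
  have key : ((∑ i, ∑ a, ‖(A i *ᵥ x) a‖ ^ 2 : ℝ) : ℂ) = star x ⬝ᵥ (B *ᵥ x) := by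
    rw [Complex.ofReal_sum]
    have h1 : ∀ i : Fin n, ((∑ a, ‖(A i *ᵥ x) a‖ ^ 2 : ℝ) : ℂ)
        = star x ⬝ᵥ ((A i * A i) *ᵥ x) := by
      intro i
      rw [← star_dot_self (A i *ᵥ x)]
      rw [star_mulVec, ← Matrix.mulVec_mulVec]
      rw [dotProduct_mulVec (star x) _ (A i *ᵥ x), (hA i).eq]
    rw [Finset.sum_congr rfl fun i _ => h1 i]
    have hmv : B *ᵥ x = ∑ i, (A i * A i) *ᵥ x := by
      ext a
      rw [hB]
      simp only [Matrix.mulVec, dotProduct, Matrix.sum_apply, Finset.sum_apply,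
        Finset.sum_mul]
      rw [Finset.sum_comm]
    rw [hmv]
    simp only [dotProduct, Finset.sum_apply, Finset.mul_sum]
    rw [Finset.sum_comm]
  have hre : ∑ i, ∑ a, ‖(A i *ᵥ x) a‖ ^ 2 ≤ ‖star x ⬝ᵥ (B *ᵥ x)‖ := by
    rw [← key]
    rw [Complex.norm_real, Real.norm_eq_abs]
    exact le_abs_self _
  calc ∑ i, ∑ a, ‖(A i *ᵥ x) a‖ ^ 2 ≤ ‖star x ⬝ᵥ (B *ᵥ x)‖ := hre
    _ ≤ Real.sqrt (∑ a, ‖x a‖ ^ 2) * Real.sqrt (∑ a, ‖(B *ᵥ x) a‖ ^ 2) :=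
        abs_star_dot_le _ _
    _ ≤ Real.sqrt (∑ a, ‖x a‖ ^ 2) *
        (opNorm B * Real.sqrt (∑ a, ‖x a‖ ^ 2)) := by
        exact mul_le_mul_of_nonneg_left (mulVec_norm_le B x) (Real.sqrt_nonneg _)
    _ = opNorm B * (Real.sqrt (∑ a, ‖x a‖ ^ 2) * Real.sqrt (∑ a, ‖x a‖ ^ 2)) := by ring
    _ = sigmaParam A ^ 2 * ∑ a, ‖x a‖ ^ 2 := by
        rw [Real.mul_self_sqrt (Finset.sum_nonneg fun _ _ => sq_nonneg _), hsig]

lemma sigmaParam_nonneg (A : Fin n → Matrix (Fin d) (Fin d) ℂ) : 0 ≤ sigmaParam A :=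
  Real.sqrt_nonneg _

lemma mulVec_unitary_sumsq (W : Matrix (Fin d) (Fin d) ℂ) (hW : W ∈ Matrix.unitaryGroup (Fin d) ℂ)
    (z : Fin d → ℂ) :
    ∑ e, ‖(W *ᵥ z) e‖ ^ 2 = ∑ e, ‖z e‖ ^ 2 := by
  have h1 : star (W *ᵥ z) ⬝ᵥ (W *ᵥ z) = star z ⬝ᵥ z := by
    rw [star_mulVec, dotProduct_mulVec, vecMul_vecMul, ← dotProduct_mulVec]
    have : Wᴴ * W = 1 := by
      have := hW.1
      rwa [Matrix.star_eq_conjTranspose] at this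
    rw [this, Matrix.one_mulVec]
  have h2 := star_dot_self (W *ᵥ z)
  have h3 := star_dot_self z
  rw [h2, h3] at h1
  exact_mod_cast h1

lemma frsq_unitary_left (U N : Matrix (Fin d) (Fin d) ℂ) (hU : U ∈ Matrix.unitaryGroup (Fin d) ℂ) :
    frsq (U * N) = frsq N := by
  rw [← trace_conjTranspose_mul_re, ← trace_conjTranspose_mul_re]
  have : (U * N)ᴴ * (U * N) = Nᴴ * N := by
    rw [conjTranspose_mul]
    have h1 : Uᴴ * U = 1 := by
      have := hU.1; rwa [Matrix.star_eq_conjTranspose] at this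
    calc Nᴴ * Uᴴ * (U * N) = Nᴴ * (Uᴴ * U) * N := by noncomm_ring
      _ = Nᴴ * N := by rw [h1, Matrix.mul_one]
  rw [this]

lemma frsq_unitary_right (N V : Matrix (Fin d) (Fin d) ℂ) (hV : V ∈ Matrix.unitaryGroup (Fin d) ℂ) :
    frsq (N * V) = frsq N := by
  rw [← trace_conjTranspose_mul_re, ← trace_conjTranspose_mul_re]
  have h1 : V * Vᴴ = 1 := by
    have := hV.2; rwa [Matrix.star_eq_conjTranspose] at this
  have : ((N * V)ᴴ * (N * V)).trace = (Nᴴ * N).trace := by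
    rw [conjTranspose_mul]
    have e1 : Vᴴ * Nᴴ * (N * V) = Vᴴ * (Nᴴ * N) * V := by noncomm_ring
    rw [e1, Matrix.trace_mul_cycle, ← Matrix.mul_assoc, h1, Matrix.one_mul]
  rw [this]

lemma sum_swap5 {M : Type*} [AddCommMonoid M] {α β γ δ ε : Type*}
    [Fintype α] [Fintype β] [Fintype γ] [Fintype δ] [Fintype ε]
    (f : α → β → γ → δ → ε → M) :
    ∑ i, ∑ j, ∑ b, ∑ a, ∑ e, f i j b a e = ∑ a, ∑ e, ∑ b, ∑ i, ∑ j, f i j b a e := by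
  conv_lhs => enter [2, i, 2, j]; rw [Finset.sum_comm]
  conv_lhs => enter [2, i, 2, j, 2, a]; rw [Finset.sum_comm]
  conv_lhs => enter [2, i]; rw [Finset.sum_comm]
  conv_lhs => enter [2, i, 2, a]; rw [Finset.sum_comm]
  conv_lhs => enter [2, i, 2, a, 2, e]; rw [Finset.sum_comm]
  rw [Finset.sum_comm]
  conv_lhs => enter [2, a]; rw [Finset.sum_comm]
  conv_lhs => enter [2, a, 2, e]; rw [Finset.sum_comm]

section core
variable {n' : ℕ}
variable (A : Fin n → Matrix (Fin d) (Fin d) ℂ) (A' : Fin n' → Matrix (Fin d) (Fin d) ℂ)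
variable (U V W : Matrix (Fin d) (Fin d) ℂ) (x y : Fin d → ℂ)

/-- per-(i,j) expansion -/
lemma term_expand (hA : ∀ i, (A i).IsHermitian) (i : Fin n) (j : Fin n') :
    star x ⬝ᵥ ((A i * U * A' j * V * A i * W * A' j) *ᵥ y)
      = ∑ b, (∑ a, star ((A i *ᵥ x) a) * (U * A' j * V) a b) *
             (∑ e, star ((A i) e b) * ((W * A' j) *ᵥ y) e) := by
  have hassoc : A i * U * A' j * V * A i * W * A' j
      = (A i * (U * A' j * V)) * (A i * (W * A' j)) := by noncomm_ring
  rw [hassoc, ← Matrix.mulVec_mulVec, dotProduct_mulVec]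
  have hvm : star x ᵥ* (A i * (U * A' j * V)) = star (A i *ᵥ x) ᵥ* (U * A' j * V) := by
    rw [← Matrix.vecMul_vecMul]
    congr 1
    rw [star_mulVec, (hA i).eq]
  rw [hvm, ← Matrix.mulVec_mulVec]
  simp only [dotProduct, Matrix.vecMul, Matrix.mulVec, Pi.star_apply]
  refine Finset.sum_congr rfl fun b _ => ?_
  congr 1
  refine Finset.sum_congr rfl fun e _ => ?_
  congr 1
  exact ((hA i).apply b e).symm

/-- the central algebraic identity -/
lemma core_identity (hA : ∀ i, (A i).IsHermitian) :
    star x ⬝ᵥ ((∑ i, ∑ j, A i * U * A' j * V * A i * W * A' j) *ᵥ y)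
      = ∑ a, ∑ e, ∑ b,
          star (∑ i, (A i *ᵥ x) a * (A i) e b) *
          (∑ j, (U * A' j * V) a b * ((W * A' j) *ᵥ y) e) := by
  have hsplit : star x ⬝ᵥ ((∑ i, ∑ j, A i * U * A' j * V * A i * W * A' j) *ᵥ y)
      = ∑ i, ∑ j, star x ⬝ᵥ ((A i * U * A' j * V * A i * W * A' j) *ᵥ y) := by
    have h1 : (∑ i, ∑ j, A i * U * A' j * V * A i * W * A' j) *ᵥ y
        = ∑ i, ∑ j, ((A i * U * A' j * V * A i * W * A' j) *ᵥ y) := by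
      ext b
      simp only [Matrix.mulVec, dotProduct, Matrix.sum_apply, Finset.sum_apply,
        Finset.sum_mul]
      rw [Finset.sum_comm]
      exact Finset.sum_congr rfl fun i _ => Finset.sum_comm
    rw [h1]
    simp only [dotProduct, Finset.sum_apply, Finset.mul_sum]
    rw [Finset.sum_comm]
    exact Finset.sum_congr rfl fun i _ => Finset.sum_comm
  rw [hsplit]
  have hterm := fun (i : Fin n) (j : Fin n') => term_expand A A' U V W x y hA i j
  rw [Finset.sum_congr rfl fun i _ => Finset.sum_congr rfl fun j _ => hterm i j]
  have hLHS : ∀ i j, (∑ b, (∑ a, star ((A i *ᵥ x) a) * (U * A' j * V) a b) *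
             (∑ e, star ((A i) e b) * ((W * A' j) *ᵥ y) e))
      = ∑ b, ∑ a, ∑ e, (star ((A i *ᵥ x) a) * star ((A i) e b)) *
          ((U * A' j * V) a b * ((W * A' j) *ᵥ y) e) := by
    intro i j
    refine Finset.sum_congr rfl fun b _ => ?_
    rw [Finset.sum_mul_sum]
    exact Finset.sum_congr rfl fun a _ => Finset.sum_congr rfl fun e _ => by ring
  rw [Finset.sum_congr rfl fun i _ => Finset.sum_congr rfl fun j _ => hLHS i j]
  rw [sum_swap5 (fun i j b a e => (star ((A i *ᵥ x) a) * star ((A i) e b)) *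
          ((U * A' j * V) a b * ((W * A' j) *ᵥ y) e))]
  refine Finset.sum_congr rfl fun a _ => Finset.sum_congr rfl fun e _ =>
    Finset.sum_congr rfl fun b _ => ?_
  rw [star_sum, Finset.sum_mul_sum]
  refine Finset.sum_congr rfl fun i _ => Finset.sum_congr rfl fun j _ => ?_
  rw [star_mul']

lemma boundE (hA : ∀ i, (A i).IsHermitian) :
    ∑ a, ∑ e, ∑ b, ‖∑ i, (A i *ᵥ x) a * (A i) e b‖ ^ 2
      ≤ vParam A ^ 2 * (sigmaParam A ^ 2 * ∑ a, ‖x a‖ ^ 2) := by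
  have hper : ∀ a : Fin d, ∑ e, ∑ b, ‖∑ i, (A i *ᵥ x) a * (A i) e b‖ ^ 2
      ≤ vParam A ^ 2 * ∑ i, ‖(A i *ᵥ x) a‖ ^ 2 := by
    intro a
    have hentry : ∀ e b, (∑ i, ((A i *ᵥ x) a) • A i) e b = ∑ i, (A i *ᵥ x) a * (A i) e b := by
      intro e b
      simp [Matrix.sum_apply]
    have := frsq_sum_smul_le A hA (fun i => (A i *ᵥ x) a)
    unfold frsq at this
    calc ∑ e, ∑ b, ‖∑ i, (A i *ᵥ x) a * (A i) e b‖ ^ 2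
        = ∑ e, ∑ b, ‖(∑ i, ((A i *ᵥ x) a) • A i) e b‖ ^ 2 := by
          exact Finset.sum_congr rfl fun e _ => Finset.sum_congr rfl fun b _ => by
            rw [hentry]
      _ ≤ vParam A ^ 2 * ∑ i, ‖(A i *ᵥ x) a‖ ^ 2 := this
  calc ∑ a, ∑ e, ∑ b, ‖∑ i, (A i *ᵥ x) a * (A i) e b‖ ^ 2
      ≤ ∑ a, vParam A ^ 2 * ∑ i, ‖(A i *ᵥ x) a‖ ^ 2 :=
        Finset.sum_le_sum fun a _ => hper a
    _ = vParam A ^ 2 * ∑ i, ∑ a, ‖(A i *ᵥ x) a‖ ^ 2 := by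
        rw [← Finset.mul_sum, Finset.sum_comm]
    _ ≤ vParam A ^ 2 * (sigmaParam A ^ 2 * ∑ a, ‖x a‖ ^ 2) := by
        exact mul_le_mul_of_nonneg_left (sum_mulVec_sq_le A hA x) (sq_nonneg _)

lemma boundF (hA' : ∀ j, (A' j).IsHermitian)
    (hU : U ∈ Matrix.unitaryGroup (Fin d) ℂ) (hV : V ∈ Matrix.unitaryGroup (Fin d) ℂ)
    (hW : W ∈ Matrix.unitaryGroup (Fin d) ℂ) :
    ∑ a, ∑ e, ∑ b, ‖∑ j, (U * A' j * V) a b * ((W * A' j) *ᵥ y) e‖ ^ 2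
      ≤ vParam A' ^ 2 * (sigmaParam A' ^ 2 * ∑ a, ‖y a‖ ^ 2) := by
  rw [Finset.sum_comm]
  have hper : ∀ e : Fin d, ∑ a, ∑ b, ‖∑ j, (U * A' j * V) a b * ((W * A' j) *ᵥ y) e‖ ^ 2
      ≤ vParam A' ^ 2 * ∑ j, ‖((W * A' j) *ᵥ y) e‖ ^ 2 := by
    intro e
    set ζ : Fin n' → ℂ := fun j => ((W * A' j) *ᵥ y) e with hζ
    have hmat : (∑ j, ζ j • (U * A' j * V)) = U * (∑ j, ζ j • A' j) * V := by
      rw [Finset.mul_sum, Finset.sum_mul]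
      refine Finset.sum_congr rfl fun j _ => ?_
      rw [mul_smul_comm, smul_mul_assoc]
    have hentry : ∀ a b, (∑ j, ζ j • (U * A' j * V)) a b
        = ∑ j, (U * A' j * V) a b * ((W * A' j) *ᵥ y) e := by
      intro a b
      simp only [Matrix.sum_apply, Matrix.smul_apply, smul_eq_mul, hζ]
      exact Finset.sum_congr rfl fun j _ => mul_comm _ _
    calc ∑ a, ∑ b, ‖∑ j, (U * A' j * V) a b * ((W * A' j) *ᵥ y) e‖ ^ 2
        = frsq (∑ j, ζ j • (U * A' j * V)) := by
          unfold frsq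
          exact Finset.sum_congr rfl fun a _ => Finset.sum_congr rfl fun b _ => by
            rw [hentry]
      _ = frsq (∑ j, ζ j • A' j) := by
          rw [hmat, frsq_unitary_right _ _ hV, frsq_unitary_left _ _ hU]
      _ ≤ vParam A' ^ 2 * ∑ j, ‖ζ j‖ ^ 2 := frsq_sum_smul_le A' hA' ζ
  calc ∑ e, ∑ a, ∑ b, ‖∑ j, (U * A' j * V) a b * ((W * A' j) *ᵥ y) e‖ ^ 2
      ≤ ∑ e, vParam A' ^ 2 * ∑ j, ‖((W * A' j) *ᵥ y) e‖ ^ 2 :=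
        Finset.sum_le_sum fun e _ => hper e
    _ = vParam A' ^ 2 * ∑ j, ∑ e, ‖((W * A' j) *ᵥ y) e‖ ^ 2 := by
        rw [← Finset.mul_sum, Finset.sum_comm]
    _ = vParam A' ^ 2 * ∑ j, ∑ e, ‖(A' j *ᵥ y) e‖ ^ 2 := by
        congr 1
        refine Finset.sum_congr rfl fun j _ => ?_
        rw [← Matrix.mulVec_mulVec]
        exact mulVec_unitary_sumsq W hW (A' j *ᵥ y)
    _ ≤ vParam A' ^ 2 * (sigmaParam A' ^ 2 * ∑ a, ‖y a‖ ^ 2) :=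
        mul_le_mul_of_nonneg_left (sum_mulVec_sq_le A' hA' y) (sq_nonneg _)

end core

lemma cs3 (f g : Fin d → Fin d → Fin d → ℂ) :
    ‖∑ a, ∑ e, ∑ b, star (f a e b) * g a e b‖ ≤
      Real.sqrt (∑ a, ∑ e, ∑ b, ‖f a e b‖ ^ 2) *
      Real.sqrt (∑ a, ∑ e, ∑ b, ‖g a e b‖ ^ 2) := by
  have h := abs_sum_mul_le (fun p : Fin d × Fin d × Fin d => star (f p.1 p.2.1 p.2.2))
    (fun p : Fin d × Fin d × Fin d => g p.1 p.2.1 p.2.2)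
  simp only [Fintype.sum_prod_type] at h
  have habs : ∀ z : ℂ, ‖star z‖ = ‖z‖ := fun z => by
    rw [Complex.star_def, Complex.norm_conj]
  simp only [habs] at h
  exact h

section main
variable {n' : ℕ}
variable (A : Fin n → Matrix (Fin d) (Fin d) ℂ) (A' : Fin n' → Matrix (Fin d) (Fin d) ℂ)

lemma opNorm_S_le (hA : ∀ i, (A i).IsHermitian) (hA' : ∀ j, (A' j).IsHermitian)
    (U V W : Matrix (Fin d) (Fin d) ℂ)
    (hU : U ∈ Matrix.unitaryGroup (Fin d) ℂ) (hV : V ∈ Matrix.unitaryGroup (Fin d) ℂ)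
    (hW : W ∈ Matrix.unitaryGroup (Fin d) ℂ) :
    opNorm (∑ i, ∑ j, A i * U * A' j * V * A i * W * A' j)
      ≤ vParam A * sigmaParam A * (vParam A' * sigmaParam A') := by
  have hvnn := vParam_nonneg A
  have hv'nn := vParam_nonneg A'
  have hsnn := sigmaParam_nonneg A
  have hs'nn := sigmaParam_nonneg A'
  refine opNorm_le_of_forms _ _ (mul_nonneg (mul_nonneg hvnn hsnn) (mul_nonneg hv'nn hs'nn)) ?_
  intro x y
  rw [core_identity A A' U V W x y hA]
  calc ‖∑ a, ∑ e, ∑ b,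
          star (∑ i, (A i *ᵥ x) a * (A i) e b) *
          (∑ j, (U * A' j * V) a b * ((W * A' j) *ᵥ y) e)‖
      ≤ Real.sqrt (∑ a, ∑ e, ∑ b, ‖∑ i, (A i *ᵥ x) a * (A i) e b‖ ^ 2) *
        Real.sqrt (∑ a, ∑ e, ∑ b,
          ‖∑ j, (U * A' j * V) a b * ((W * A' j) *ᵥ y) e‖ ^ 2) :=
        cs3 _ _
    _ ≤ Real.sqrt (vParam A ^ 2 * (sigmaParam A ^ 2 * ∑ a, ‖x a‖ ^ 2)) *
        Real.sqrt (vParam A' ^ 2 * (sigmaParam A' ^ 2 * ∑ a, ‖y a‖ ^ 2)) := by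
        exact mul_le_mul (Real.sqrt_le_sqrt (boundE A x hA))
          (Real.sqrt_le_sqrt (boundF A' U V W y hA' hU hV hW))
          (Real.sqrt_nonneg _) (Real.sqrt_nonneg _)
    _ = vParam A * sigmaParam A * (vParam A' * sigmaParam A') *
        (Real.sqrt (∑ a, ‖x a‖ ^ 2) * Real.sqrt (∑ a, ‖y a‖ ^ 2)) := by
        rw [Real.sqrt_mul (sq_nonneg _), Real.sqrt_mul (sq_nonneg _),
          Real.sqrt_mul (sq_nonneg _), Real.sqrt_mul (sq_nonneg _),
          Real.sqrt_sq hvnn, Real.sqrt_sq hv'nn, Real.sqrt_sq hsnn, Real.sqrt_sq hs'nn]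
        ring

end main

theorem wParam_pow_four_le'
    (d n n' : ℕ)
    (A : Fin n → Matrix (Fin d) (Fin d) ℂ) (hA : ∀ i, (A i).IsHermitian)
    (A' : Fin n' → Matrix (Fin d) (Fin d) ℂ) (hA' : ∀ j, (A' j).IsHermitian) :
    (sSup {x : ℝ | ∃ U V W : Matrix (Fin d) (Fin d) ℂ,
      U ∈ Matrix.unitaryGroup (Fin d) ℂ ∧ V ∈ Matrix.unitaryGroup (Fin d) ℂ ∧
      W ∈ Matrix.unitaryGroup (Fin d) ℂ ∧
      x = opNorm (∑ i, ∑ j, A i * U * A' j * V * A i * W * A' j) ^ (1 / 4 : ℝ)}) ^ 4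
      ≤ vParam A * sigmaParam A * (vParam A' * sigmaParam A') := by
  set B := vParam A * sigmaParam A * (vParam A' * sigmaParam A') with hBdef
  have hB : 0 ≤ B := mul_nonneg (mul_nonneg (vParam_nonneg A) (sigmaParam_nonneg A))
    (mul_nonneg (vParam_nonneg A') (sigmaParam_nonneg A'))
  set S := {x : ℝ | ∃ U V W : Matrix (Fin d) (Fin d) ℂ,
      U ∈ Matrix.unitaryGroup (Fin d) ℂ ∧ V ∈ Matrix.unitaryGroup (Fin d) ℂ ∧
      W ∈ Matrix.unitaryGroup (Fin d) ℂ ∧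
      x = opNorm (∑ i, ∑ j, A i * U * A' j * V * A i * W * A' j) ^ (1 / 4 : ℝ)} with hSdef
  have h1 : sSup S ≤ B ^ ((1:ℝ)/4) := by
    refine Real.sSup_le ?_ (Real.rpow_nonneg hB _)
    rintro x ⟨U, V, W, hU, hV, hW, rfl⟩
    exact Real.rpow_le_rpow (norm_nonneg _) (opNorm_S_le A A' hA hA' U V W hU hV hW)
      (by norm_num)
  have h0 : 0 ≤ sSup S := by
    refine Real.sSup_nonneg ?_
    rintro x ⟨U, V, W, hU, hV, hW, rfl⟩
    exact Real.rpow_nonneg (norm_nonneg _) _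
  have h2 : (B ^ ((1:ℝ)/4)) ^ (4:ℕ) = B := by
    rw [← Real.rpow_natCast (B ^ ((1:ℝ)/4)) 4, ← Real.rpow_mul hB]
    norm_num
  calc (sSup S) ^ 4 ≤ (B ^ ((1:ℝ)/4)) ^ 4 := pow_le_pow_left₀ h0 h1 4
    _ = B := h2

end Aux

/-- w(X,X')⁴ ≤ v(X)σ(X)v(X')σ(X'). -/
theorem wParam_pow_four_le
    (d n n' : ℕ)
    (A : Fin n → Matrix (Fin d) (Fin d) ℂ) (hA : ∀ i, (A i).IsHermitian)
    (A' : Fin n' → Matrix (Fin d) (Fin d) ℂ) (hA' : ∀ j, (A' j).IsHermitian) :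
    wParam A A' ^ 4 ≤ vParam A * sigmaParam A * (vParam A' * sigmaParam A') := by
  unfold wParam
  exact wParam_pow_four_le' d n n' A hA A' hA'
end
end

section
/- Let d ≥ 1 and let (b_{ij})_{1 ≤ i,j ≤ d} be nonnegative reals with b_{ij} = b_{ji}. Define K := inf_{x ∈ ℝ^d, x > 0} max_{1 ≤ i ≤ d} ( 1/x_i + Σ_{j=1}^d b_{ij}² x_j ). Then: (i) K = 2 sup_{w ∈ Δ^{d−1}} Σ_{i=1}^d ( w_i Σ_{j=1}^d b_{ij}² w_j )^{1/2}, where Δ^{d−1} = { w ∈ ℝ^d : w ≥ 0, Σ_i w_i = 1 }; (ii) K ≤ 2 max_i ( Σ_j b_{ij}² )^{1/2}; and (iii) if the nonnegative matrix B = (b_{ij}²) is irreducible, then K = 2 max_i ( Σ_j b_{ij}² )^{1/2} holds if and only if max_i Σ_j b_{ij}² = min_i Σ_j b_{ij}². -/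
open Matrix

noncomputable section

lemma amgm {a c : ℝ} (ha : 0 ≤ a) (hc : 0 ≤ c) : 2 * Real.sqrt (a * c) ≤ a + c := by
  rw [Real.sqrt_mul ha]
  nlinarith [sq_nonneg (Real.sqrt a - Real.sqrt c), Real.sq_sqrt ha, Real.sq_sqrt hc,
    Real.sqrt_nonneg a, Real.sqrt_nonneg c]

lemma amgm_eq {a c : ℝ} (ha : 0 ≤ a) (hc : 0 ≤ c) (h : a + c = 2 * Real.sqrt (a * c)) :
    a = c := by
  have h1 : Real.sqrt (a*c) = Real.sqrt a * Real.sqrt c := Real.sqrt_mul ha c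
  nlinarith [sq_nonneg (Real.sqrt a - Real.sqrt c), Real.sq_sqrt ha, Real.sq_sqrt hc,
    Real.sqrt_nonneg a, Real.sqrt_nonneg c]

lemma sumswap {d : ℕ} (b : Fin d → Fin d → ℝ) (hbsymm : ∀ i j, b i j = b j i)
    (w x : Fin d → ℝ) :
    ∑ i, w i * ∑ j, b i j ^ 2 * x j = ∑ i, x i * ∑ j, b i j ^ 2 * w j := by
  simp_rw [Finset.mul_sum]
  rw [Finset.sum_comm]
  refine Finset.sum_congr rfl fun i _ => Finset.sum_congr rfl fun j _ => ?_
  rw [hbsymm j i]; ring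

lemma matpow_nonneg {d : ℕ} (B : Matrix (Fin d) (Fin d) ℝ) (h : ∀ i j, 0 ≤ B i j) :
    ∀ k, ∀ i j, 0 ≤ (B ^ k) i j := by
  intro k
  induction k with
  | zero => intro i j; simp [Matrix.one_apply]; split <;> norm_num
  | succ n ih =>
      intro i j
      rw [pow_succ, Matrix.mul_apply]
      exact Finset.sum_nonneg fun l _ => mul_nonneg (ih i l) (h l j)

lemma matpow_eig {d : ℕ} (B : Matrix (Fin d) (Fin d) ℝ) (w : Fin d → ℝ) (μ : ℝ)
    (h : ∀ i, ∑ j, B i j * w j = μ * w i) :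
    ∀ k i, ∑ j, (B ^ k) i j * w j = μ ^ k * w i := by
  intro k
  induction k with
  | zero => intro i; simp [Matrix.one_apply]
  | succ n ih =>
      intro i
      have hp : ∀ j, (B ^ (n+1)) i j = ∑ l, (B ^ n) i l * B l j := by
        intro j; rw [pow_succ, Matrix.mul_apply]
      simp_rw [hp, Finset.sum_mul]
      rw [Finset.sum_comm]
      calc ∑ l, ∑ j, (B ^ n) i l * B l j * w j
          = ∑ l, (B ^ n) i l * (μ * w l) := by
            refine Finset.sum_congr rfl fun l _ => ?_
            rw [← h l, Finset.mul_sum]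
            exact Finset.sum_congr rfl fun j _ => by ring
        _ = μ ^ (n+1) * w i := by
            simp_rw [show ∀ l, (B ^ n) i l * (μ * w l) = μ * ((B ^ n) i l * w l) by
              intro l; ring]
            rw [← Finset.mul_sum, ih i]; ring

lemma inv_convex {x y t s : ℝ} (hx : 0 < x) (hy : 0 < y) (ht : 0 ≤ t) (hs : 0 ≤ s)
    (hts : t + s = 1) : (t * x + s * y)⁻¹ ≤ t * x⁻¹ + s * y⁻¹ := by
  rcases eq_or_lt_of_le ht with h0 | ht
  · have h1 : s = 1 := by linarith
    simp [← h0, h1]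
  rcases eq_or_lt_of_le hs with h0 | hs
  · have h1 : t = 1 := by linarith
    simp [← h0, h1]
  have hpos : 0 < t * x + s * y := by positivity
  rw [inv_le_iff_one_le_mul₀ hpos]
  have key : (t * x⁻¹ + s * y⁻¹) * (t * x + s * y) = t^2 + s^2 + t*s*(x/y + y/x) := by
    field_simp; ring
  have h2 : x/y + y/x ≥ 2 := by
    rw [ge_iff_le, div_add_div _ _ (ne_of_gt hy) (ne_of_gt hx), le_div_iff₀ (by positivity)]
    nlinarith [sq_nonneg (x - y)]
  nlinarith [mul_pos ht hs]

set_option maxHeartbeats 1000000 in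
/-- Lehner's formula for the independent-entry free model:
variational formulas for K = ‖X_free‖ and characterization of equality
K = 2σ(X) in the irreducible case. -/
theorem lehner_independent_entries
    (d : ℕ) (hd : 1 ≤ d) (b : Fin d → Fin d → ℝ)
    (hbnn : ∀ i j, 0 ≤ b i j) (hbsymm : ∀ i j, b i j = b j i)
    (K : ℝ)
    (hK : K = sInf {x : ℝ | ∃ xv : Fin d → ℝ, (∀ i, 0 < xv i) ∧
        x = ⨆ i, ((xv i)⁻¹ + ∑ j, b i j ^ 2 * xv j)})
    (B : Matrix (Fin d) (Fin d) ℝ) (hB : B = Matrix.of fun i j => b i j ^ 2) :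
    (K = 2 * sSup {x : ℝ | ∃ w : Fin d → ℝ, (∀ i, 0 ≤ w i) ∧ (∑ i, w i) = 1 ∧
        x = ∑ i, Real.sqrt (w i * ∑ j, b i j ^ 2 * w j)}) ∧
    (K ≤ 2 * ⨆ i, Real.sqrt (∑ j, b i j ^ 2)) ∧
    ((∀ i j : Fin d, ∃ k : ℕ, 1 ≤ k ∧ 0 < (B ^ k) i j) →
      (K = 2 * ⨆ i, Real.sqrt (∑ j, b i j ^ 2) ↔
        (⨆ i, ∑ j, b i j ^ 2) = ⨅ i, ∑ j, b i j ^ 2)) := by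
  haveI : Nonempty (Fin d) := ⟨⟨0, hd⟩⟩
  set KS : Set ℝ := {x : ℝ | ∃ xv : Fin d → ℝ, (∀ i, 0 < xv i) ∧
      x = ⨆ i, ((xv i)⁻¹ + ∑ j, b i j ^ 2 * xv j)} with hKSdef
  set SS : Set ℝ := {x : ℝ | ∃ w : Fin d → ℝ, (∀ i, 0 ≤ w i) ∧ (∑ i, w i) = 1 ∧
      x = ∑ i, Real.sqrt (w i * ∑ j, b i j ^ 2 * w j)} with hSSdef
  -- basic positivity facts
  have hRnn : ∀ i, (0:ℝ) ≤ ∑ j, b i j ^ 2 := fun i =>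
    Finset.sum_nonneg fun j _ => sq_nonneg _
  have hgnn : ∀ (w : Fin d → ℝ), (∀ i, 0 ≤ w i) → ∀ i, (0:ℝ) ≤ ∑ j, b i j ^ 2 * w j :=
    fun w hw i => Finset.sum_nonneg fun j _ => mul_nonneg (sq_nonneg _) (hw j)
  -- the key algebraic identity
  have h1 : ∀ w x : Fin d → ℝ, ∑ i, w i * ((x i)⁻¹ + ∑ j, b i j ^ 2 * x j)
      = ∑ i, (w i * (x i)⁻¹ + x i * ∑ j, b i j ^ 2 * w j) := by
    intro w x
    rw [Finset.sum_add_distrib]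
    simp_rw [mul_add]
    rw [Finset.sum_add_distrib, sumswap b hbsymm w x]
  have hKS_ne : KS.Nonempty := by
    refine ⟨_, fun _ => (1:ℝ), fun i => one_pos, rfl⟩
  have hKS_lb : ∀ y ∈ KS, (0:ℝ) ≤ y := by
    rintro y ⟨x, hx, rfl⟩
    have hb : BddAbove (Set.range fun i => (x i)⁻¹ + ∑ j, b i j ^ 2 * x j) :=
      Set.Finite.bddAbove (Set.finite_range _)
    refine le_trans ?_ (le_ciSup hb (Classical.arbitrary (Fin d)))
    have := hx (Classical.arbitrary (Fin d))
    have := hgnn x (fun i => (hx i).le) (Classical.arbitrary (Fin d))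
    positivity
  have hKS_bdd : BddBelow KS := ⟨0, hKS_lb⟩
  have hSS_ne : SS.Nonempty := by
    refine ⟨_, fun _ => (d:ℝ)⁻¹, fun i => by positivity, ?_, rfl⟩
    simp [Finset.sum_const, Finset.card_univ]
    field_simp
  have hSS_ub : ∀ y ∈ SS, y ≤ ∑ i, Real.sqrt (∑ j, b i j ^ 2) := by
    rintro y ⟨w, hw, hw1, rfl⟩
    refine Finset.sum_le_sum fun i _ => Real.sqrt_le_sqrt ?_
    have hwle1 : w i ≤ 1 := by
      calc w i ≤ ∑ k, w k := Finset.single_le_sum (fun k _ => hw k) (Finset.mem_univ i)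
        _ = 1 := hw1
    calc w i * ∑ j, b i j ^ 2 * w j ≤ 1 * ∑ j, b i j ^ 2 * w j :=
          mul_le_mul_of_nonneg_right hwle1 (hgnn w hw i)
      _ = ∑ j, b i j ^ 2 * w j := one_mul _
      _ ≤ ∑ j, b i j ^ 2 := by
          refine Finset.sum_le_sum fun j _ => ?_
          have : w j ≤ 1 := by
            calc w j ≤ ∑ k, w k := Finset.single_le_sum (fun k _ => hw k) (Finset.mem_univ j)
              _ = 1 := hw1
          nlinarith [sq_nonneg (b i j), hw j]
  have hSS_bdd : BddAbove SS := ⟨_, hSS_ub⟩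
  -- lower bound: 2 F(w) ≤ each element of KS
  have hlow : ∀ w : Fin d → ℝ, (∀ i, 0 ≤ w i) → (∑ i, w i) = 1 →
      ∀ x : Fin d → ℝ, (∀ i, 0 < x i) →
      2 * ∑ i, Real.sqrt (w i * ∑ j, b i j ^ 2 * w j)
        ≤ ⨆ i, ((x i)⁻¹ + ∑ j, b i j ^ 2 * x j) := by
    intro w hw hw1 x hx
    have hfb : BddAbove (Set.range fun i => (x i)⁻¹ + ∑ j, b i j ^ 2 * x j) :=
      Set.Finite.bddAbove (Set.finite_range _)
    have step1 : ∀ i, 2 * Real.sqrt (w i * ∑ j, b i j ^ 2 * w j)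
        ≤ w i * (x i)⁻¹ + x i * ∑ j, b i j ^ 2 * w j := by
      intro i
      have hxne : x i ≠ 0 := (hx i).ne'
      have harg : w i * ∑ j, b i j ^ 2 * w j
          = (w i * (x i)⁻¹) * (x i * ∑ j, b i j ^ 2 * w j) := by
        field_simp
      rw [harg]
      exact amgm (mul_nonneg (hw i) (inv_nonneg.mpr (hx i).le)) (mul_nonneg (hx i).le (hgnn w hw i))
    calc 2 * ∑ i, Real.sqrt (w i * ∑ j, b i j ^ 2 * w j)
        = ∑ i, 2 * Real.sqrt (w i * ∑ j, b i j ^ 2 * w j) := Finset.mul_sum _ _ _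
      _ ≤ ∑ i, (w i * (x i)⁻¹ + x i * ∑ j, b i j ^ 2 * w j) :=
          Finset.sum_le_sum fun i _ => step1 i
      _ = ∑ i, w i * ((x i)⁻¹ + ∑ j, b i j ^ 2 * x j) := (h1 w x).symm
      _ ≤ ∑ i, w i * ⨆ k, ((x k)⁻¹ + ∑ j, b k j ^ 2 * x j) :=
          Finset.sum_le_sum fun i _ => mul_le_mul_of_nonneg_left
            (le_ciSup (f := fun k => (x k)⁻¹ + ∑ j, b k j ^ 2 * x j) hfb i) (hw i)
      _ = ⨆ k, ((x k)⁻¹ + ∑ j, b k j ^ 2 * x j) := by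
          rw [← Finset.sum_mul, hw1, one_mul]

  have hgeS : 2 * sSup SS ≤ K := by
    have : sSup SS ≤ K / 2 := by
      refine csSup_le hSS_ne ?_
      rintro y ⟨w, hw, hw1, rfl⟩
      rw [le_div_iff₀ (by norm_num : (0:ℝ) < 2)]
      rw [hK]
      refine le_csInf hKS_ne ?_
      rintro e ⟨x, hx, rfl⟩
      rw [mul_comm]
      exact hlow w hw hw1 x hx
    linarith
  -- near-optimal x for a given w
  have hinfx : ∀ w : Fin d → ℝ, (∀ i, 0 ≤ w i) → (∑ i, w i) = 1 → ∀ ε : ℝ, 0 < ε →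
      ∃ x : Fin d → ℝ, (∀ i, 0 < x i) ∧
        ∑ i, (w i * (x i)⁻¹ + x i * ∑ j, b i j ^ 2 * w j)
          ≤ 2 * ∑ i, Real.sqrt (w i * ∑ j, b i j ^ 2 * w j) + ε := by
    intro w hw hw1 ε hε
    set g : Fin d → ℝ := fun i => ∑ j, b i j ^ 2 * w j with hgdef
    have hg : ∀ i, 0 ≤ g i := hgnn w hw
    set S0 : ℝ := (∑ i, (w i + g i)) + 1 with hS0def
    have hS0 : 0 < S0 := by
      have : (0:ℝ) ≤ ∑ i, (w i + g i) :=
        Finset.sum_nonneg fun i _ => add_nonneg (hw i) (hg i)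
      linarith
    set η : ℝ := ε / S0 with hηdef
    have hη : 0 < η := div_pos hε hS0
    refine ⟨fun i => if 0 < w i then (if 0 < g i then Real.sqrt (w i / g i) else η⁻¹) else η,
      fun i => ?_, ?_⟩
    · dsimp only
      split
      · split
        · next hwi hgi => exact Real.sqrt_pos.mpr (div_pos hwi hgi)
        · exact inv_pos.mpr hη
      · exact hη
    · have bound : ∀ i, w i * ((if 0 < w i then
          (if 0 < g i then Real.sqrt (w i / g i) else η⁻¹) else η))⁻¹
          + (if 0 < w i then (if 0 < g i then Real.sqrt (w i / g i) else η⁻¹) else η) * g i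
          ≤ 2 * Real.sqrt (w i * g i) + η * (w i + g i) := by
        intro i
        by_cases hwi : 0 < w i
        · by_cases hgi : 0 < g i
          · rw [if_pos hwi, if_pos hgi]
            have h1' : w i * (Real.sqrt (w i / g i))⁻¹ = Real.sqrt (w i * g i) := by
              rw [← Real.sqrt_inv, inv_div]
              rw [show w i * Real.sqrt (g i / w i)
                  = Real.sqrt ((w i)^2) * Real.sqrt (g i / w i) by
                rw [Real.sqrt_sq hwi.le]]
              rw [← Real.sqrt_mul (sq_nonneg _)]
              congr 1
              field_simp
            have h2' : Real.sqrt (w i / g i) * g i = Real.sqrt (w i * g i) := by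
              rw [show Real.sqrt (w i / g i) * g i
                  = Real.sqrt (w i / g i) * Real.sqrt ((g i)^2) by
                rw [Real.sqrt_sq hgi.le]]
              rw [← Real.sqrt_mul (by positivity)]
              congr 1
              field_simp
            rw [h1', h2']
            have : 0 ≤ η * (w i + g i) := by positivity
            linarith
          · have hgi0 : g i = 0 := le_antisymm (not_lt.mp hgi) (hg i)
            rw [if_pos hwi, if_neg hgi, hgi0]
            rw [inv_inv]
            have : Real.sqrt (w i * 0) = 0 := by simp
            rw [this]
            ring_nf
            nlinarith [hw i, hη.le]
        · have hwi0 : w i = 0 := le_antisymm (not_lt.mp hwi) (hw i)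
          rw [if_neg hwi, hwi0]
          have : Real.sqrt ((0:ℝ) * g i) = 0 := by simp
          rw [this]
          ring_nf
          nlinarith [hg i, hη.le]
      calc ∑ i, (w i * ((if 0 < w i then
            (if 0 < g i then Real.sqrt (w i / g i) else η⁻¹) else η))⁻¹
            + (if 0 < w i then (if 0 < g i then Real.sqrt (w i / g i) else η⁻¹) else η) * g i)
          ≤ ∑ i, (2 * Real.sqrt (w i * g i) + η * (w i + g i)) :=
            Finset.sum_le_sum fun i _ => bound i
        _ = 2 * (∑ i, Real.sqrt (w i * g i)) + η * ∑ i, (w i + g i) := by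
            rw [Finset.sum_add_distrib, ← Finset.mul_sum, ← Finset.mul_sum]
        _ ≤ 2 * (∑ i, Real.sqrt (w i * g i)) + ε := by
            have h3 : η * ∑ i, (w i + g i) ≤ η * S0 := by
              refine mul_le_mul_of_nonneg_left ?_ hη.le
              rw [hS0def]; linarith
            have h4 : η * S0 = ε := by
              rw [hηdef]; field_simp
            linarith

  -- separation step
  have hsep : ∀ ε : ℝ, 0 < ε → ∃ w : Fin d → ℝ, (∀ i, 0 ≤ w i) ∧ (∑ i, w i) = 1 ∧
      ∀ x : Fin d → ℝ, (∀ i, 0 < x i) →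
        K - ε ≤ ∑ i, w i * ((x i)⁻¹ + ∑ j, b i j ^ 2 * x j) := by
    intro ε hε
    classical
    set C : Set (Fin d → ℝ) := {y | ∃ x : Fin d → ℝ, (∀ i, 0 < x i) ∧
        ∀ i, (x i)⁻¹ + ∑ j, b i j ^ 2 * x j < y i} with hCdef
    have hCconv : Convex ℝ C := by
      rintro y ⟨x, hx, hxy⟩ y' ⟨x', hx', hxy'⟩ t u ht hu htu
      rcases eq_or_lt_of_le ht with ht0 | htpos
      · have hu1 : u = 1 := by linarith
        refine ⟨x', hx', fun i => ?_⟩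
        have : (t • y + u • y') i = y' i := by
          simp [← ht0, hu1]
        rw [this]
        exact hxy' i
      rcases eq_or_lt_of_le hu with hu0 | hupos
      · have ht1 : t = 1 := by linarith
        refine ⟨x, hx, fun i => ?_⟩
        have : (t • y + u • y') i = y i := by
          simp [← hu0, ht1]
        rw [this]
        exact hxy i
      refine ⟨fun i => t * x i + u * x' i,
        fun i => add_pos (mul_pos htpos (hx i)) (mul_pos hupos (hx' i)), fun i => ?_⟩
      have happ : (t • y + u • y') i = t * y i + u * y' i := by
        simp [smul_eq_mul]
      rw [happ]
      have hlin : ∑ j, b i j ^ 2 * (t * x j + u * x' j)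
          = t * ∑ j, b i j ^ 2 * x j + u * ∑ j, b i j ^ 2 * x' j := by
        rw [Finset.mul_sum, Finset.mul_sum, ← Finset.sum_add_distrib]
        exact Finset.sum_congr rfl fun j _ => by ring
      have hinv : (t * x i + u * x' i)⁻¹ ≤ t * (x i)⁻¹ + u * (x' i)⁻¹ :=
        inv_convex (hx i) (hx' i) ht hu htu
      have hy : t * ((x i)⁻¹ + ∑ j, b i j ^ 2 * x j) < t * y i :=
        (mul_lt_mul_iff_right₀ htpos).mpr (hxy i)
      have hy' : u * ((x' i)⁻¹ + ∑ j, b i j ^ 2 * x' j) < u * y' i :=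
        (mul_lt_mul_iff_right₀ hupos).mpr (hxy' i)
      rw [hlin]
      nlinarith
    have hCopen : IsOpen C := by
      have : C = ⋃ (x : Fin d → ℝ), ⋃ (_ : ∀ i, 0 < x i),
          {y : Fin d → ℝ | ∀ i, (x i)⁻¹ + ∑ j, b i j ^ 2 * x j < y i} := by
        ext y
        simp only [hCdef, Set.mem_setOf_eq, Set.mem_iUnion]
        constructor
        · rintro ⟨x, hx, hy⟩; exact ⟨x, hx, hy⟩
        · rintro ⟨x, hx, hy⟩; exact ⟨x, hx, hy⟩
      rw [this]
      refine isOpen_iUnion fun x => isOpen_iUnion fun hx => ?_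
      have : {y : Fin d → ℝ | ∀ i, (x i)⁻¹ + ∑ j, b i j ^ 2 * x j < y i}
          = ⋂ i, {y : Fin d → ℝ | (x i)⁻¹ + ∑ j, b i j ^ 2 * x j < y i} := by
        ext y; simp
      rw [this]
      exact isOpen_iInter_of_finite fun i =>
        isOpen_lt continuous_const (continuous_apply i)
    have hzC : (fun _ => K - ε : Fin d → ℝ) ∉ C := by
      rintro ⟨x, hx, hxy⟩
      have hmem : (⨆ i, ((x i)⁻¹ + ∑ j, b i j ^ 2 * x j)) ∈ KS := ⟨x, hx, rfl⟩
      have hle : K ≤ ⨆ i, ((x i)⁻¹ + ∑ j, b i j ^ 2 * x j) := by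
        rw [hK]; exact csInf_le hKS_bdd hmem
      have hge : (⨆ i, ((x i)⁻¹ + ∑ j, b i j ^ 2 * x j)) ≤ K - ε :=
        ciSup_le fun i => (hxy i).le
      linarith
    obtain ⟨φ, hφ⟩ := geometric_hahn_banach_open_point hCconv hCopen hzC
    set v : Fin d → ℝ := fun i => -φ (fun j => if i = j then 1 else 0) with hvdef
    have hrepr : ∀ y : Fin d → ℝ, φ y = -∑ i, y i * v i := by
      intro y
      conv_lhs => rw [pi_eq_sum_univ y]
      rw [map_sum]
      rw [show ∑ i, φ (y i • fun j => if i = j then (1:ℝ) else 0)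
          = ∑ i, y i * φ (fun j => if i = j then (1:ℝ) else 0) by
        exact Finset.sum_congr rfl fun i _ => by rw [φ.map_smul]; rfl]
      rw [hvdef, ← Finset.sum_neg_distrib]
      exact Finset.sum_congr rfl fun i _ => by ring
    -- a point of C
    have hy0 : (fun i => ((1:ℝ))⁻¹ + (∑ j, b i j ^ 2 * 1) + 1) ∈ C := by
      refine ⟨fun _ => 1, fun _ => one_pos, fun i => ?_⟩
      simp only
      linarith
    have hvnn : ∀ i, 0 ≤ v i := by
      intro i
      by_contra hneg
      push_neg at hneg
      set y0 : Fin d → ℝ := fun i => ((1:ℝ))⁻¹ + (∑ j, b i j ^ 2 * 1) + 1 with hy0def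
      set t : ℝ := (φ (fun _ => K - ε) - φ y0 + 1) / (-(v i)) with htdef
      have hvi : 0 < -(v i) := by linarith
      set y1 : Fin d → ℝ := y0 + (max t 0) • (fun j => if i = j then (1:ℝ) else 0) with hy1def
      have hy1C : y1 ∈ C := by
        refine ⟨fun _ => 1, fun _ => one_pos, fun k => ?_⟩
        have : y1 k = y0 k + (max t 0) * (if i = k then 1 else 0) := by
          simp [hy1def, smul_eq_mul]
        rw [this]
        have h0 : 0 ≤ (max t 0) * (if i = k then (1:ℝ) else 0) := by
          apply mul_nonneg (le_max_right t 0)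
          split <;> norm_num
        have : ((1:ℝ))⁻¹ + (∑ j, b i j ^ 2 * 1) + 1 ≤ y0 k + (max t 0) * (if i = k then 1 else 0) → True := fun _ => trivial
        simp only [hy0def]
        linarith
      have hφ1 := hφ y1 hy1C
      have hφy1 : φ y1 = φ y0 + (max t 0) * φ (fun j => if i = j then (1:ℝ) else 0) := by
        rw [hy1def, map_add, φ.map_smul]
        rfl
      have hφe : φ (fun j => if i = j then (1:ℝ) else 0) = -(v i) := by
        rw [hvdef]; ring
      rw [hφy1, hφe] at hφ1
      have hmax : t ≤ max t 0 := le_max_left t 0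
      have ht' : t * (-(v i)) = (φ (fun _ => K - ε) - φ y0 + 1) :=
        div_mul_cancel₀ _ hvi.ne'
      nlinarith [mul_le_mul_of_nonneg_right hmax hvi.le]
    have hvsum : 0 < ∑ i, v i := by
      rcases eq_or_lt_of_le (Finset.sum_nonneg fun i _ => hvnn i) with h0 | h
      · exfalso
        have hall : ∀ i ∈ Finset.univ, v i = 0 :=
          (Finset.sum_eq_zero_iff_of_nonneg fun i _ => hvnn i).mp h0.symm
        have : φ (fun i => ((1:ℝ))⁻¹ + (∑ j, b i j ^ 2 * 1) + 1) < φ (fun _ => K - ε) :=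
          hφ _ hy0
        rw [hrepr, hrepr] at this
        simp only [hall _ (Finset.mem_univ _), mul_zero] at this
        simp at this
      · exact h
    set V : ℝ := ∑ i, v i with hVdef
    refine ⟨fun i => v i / V, fun i => div_nonneg (hvnn i) hvsum.le, ?_, ?_⟩
    · rw [← Finset.sum_div, ← hVdef, div_self hvsum.ne']
    · intro x hx
      have key : ∀ δ : ℝ, 0 < δ →
          (K - ε) * V ≤ (∑ i, v i * ((x i)⁻¹ + ∑ j, b i j ^ 2 * x j)) + δ * V := by
        intro δ hδ
        have hyC : (fun i => ((x i)⁻¹ + ∑ j, b i j ^ 2 * x j) + δ) ∈ C :=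
          ⟨x, hx, fun i => by linarith⟩
        have h5 := hφ _ hyC
        rw [hrepr, hrepr] at h5
        have hz : ∑ i, (K - ε) * v i = (K - ε) * V := by
          rw [hVdef, Finset.mul_sum]
        have hy : ∑ i, (((x i)⁻¹ + ∑ j, b i j ^ 2 * x j) + δ) * v i
            = (∑ i, v i * ((x i)⁻¹ + ∑ j, b i j ^ 2 * x j)) + δ * V := by
          rw [hVdef, Finset.mul_sum, ← Finset.sum_add_distrib]
          exact Finset.sum_congr rfl fun i _ => by ring
        rw [hy] at h5
        rw [hz] at h5
        linarith
      have key2 : (K - ε) * V ≤ ∑ i, v i * ((x i)⁻¹ + ∑ j, b i j ^ 2 * x j) := by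
        refine le_of_forall_pos_le_add fun δ hδ => ?_
        have := key (δ / V) (div_pos hδ hvsum)
        rw [div_mul_cancel₀ _ hvsum.ne'] at this
        exact this
      have hexp : ∑ i, (v i / V) * ((x i)⁻¹ + ∑ j, b i j ^ 2 * x j)
          = (∑ i, v i * ((x i)⁻¹ + ∑ j, b i j ^ 2 * x j)) / V := by
        rw [Finset.sum_div]
        exact Finset.sum_congr rfl fun i _ => by ring
      rw [hexp, le_div_iff₀ hvsum]
      linarith

  have hleS : K ≤ 2 * sSup SS := by
    refine le_of_forall_pos_le_add fun ε hε => ?_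
    obtain ⟨w, hw, hw1, hwK⟩ := hsep (ε/2) (by linarith)
    obtain ⟨x, hx, hxb⟩ := hinfx w hw hw1 (ε/2) (by linarith)
    have h2 := hwK x hx
    rw [h1 w x] at h2
    have hFle : ∑ i, Real.sqrt (w i * ∑ j, b i j ^ 2 * w j) ≤ sSup SS :=
      le_csSup hSS_bdd ⟨w, hw, hw1, rfl⟩
    linarith
  have part1 : K = 2 * sSup SS := le_antisymm hleS hgeS
  -- the maximal row index
  obtain ⟨i0, hi0⟩ := Finite.exists_max fun i => ∑ j, b i j ^ 2
  set M : ℝ := ∑ j, b i0 j ^ 2 with hMdef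
  have hM0 : (0:ℝ) ≤ M := hRnn i0
  have hsupR : (⨆ i, ∑ j, b i j ^ 2) = M := by
    refine le_antisymm (ciSup_le fun i => hi0 i) ?_
    rw [hMdef]
    exact le_ciSup (f := fun i => ∑ j, b i j ^ 2) (Set.Finite.bddAbove (Set.finite_range _)) i0
  have hsupsqrt : (⨆ i, Real.sqrt (∑ j, b i j ^ 2)) = Real.sqrt M := by
    refine le_antisymm (ciSup_le fun i => Real.sqrt_le_sqrt (hi0 i)) ?_
    rw [hMdef]
    exact le_ciSup (f := fun i => Real.sqrt (∑ j, b i j ^ 2))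
      (Set.Finite.bddAbove (Set.finite_range _)) i0
  have part2 : K ≤ 2 * Real.sqrt M := by
    have hconst : ∀ t : ℝ, 0 < t → K ≤ ⨆ i, (t⁻¹ + (∑ j, b i j ^ 2) * t) := by
      intro t ht
      have hmem : (⨆ i, (t⁻¹ + (∑ j, b i j ^ 2) * t)) ∈ KS := by
        refine ⟨fun _ => t, fun _ => ht, ?_⟩
        congr 1
        funext i
        rw [Finset.sum_mul]
      rw [hK]
      exact csInf_le hKS_bdd hmem
    rcases eq_or_lt_of_le hM0 with hM | hM
    · have hR0 : ∀ i, (∑ j, b i j ^ 2) = 0 := fun i =>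
        le_antisymm (hM ▸ hi0 i) (hRnn i)
      have hle : ∀ t : ℝ, 0 < t → K ≤ t⁻¹ := by
        intro t ht
        have := hconst t ht
        calc K ≤ ⨆ i, (t⁻¹ + (∑ j, b i j ^ 2) * t) := this
          _ ≤ t⁻¹ := ciSup_le fun i => by rw [hR0 i]; simp
      have : K ≤ 0 := by
        refine le_of_forall_pos_le_add fun ε hε => ?_
        have := hle ε⁻¹ (by positivity)
        rw [inv_inv] at this
        linarith
      rw [← hM]
      simpa using this
    · set s := Real.sqrt M with hsdef
      have hs : 0 < s := Real.sqrt_pos.mpr hM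
      have hs2 : s ^ 2 = M := Real.sq_sqrt hM0
      calc K ≤ ⨆ i, (s⁻¹⁻¹ + (∑ j, b i j ^ 2) * s⁻¹) := hconst s⁻¹ (by positivity)
        _ ≤ 2 * s := by
          refine ciSup_le fun i => ?_
          rw [inv_inv]
          have h5 : (∑ j, b i j ^ 2) * s⁻¹ ≤ M * s⁻¹ :=
            mul_le_mul_of_nonneg_right (hi0 i) (by positivity)
          have h6 : M * s⁻¹ = s := by
            rw [← hs2]; field_simp
          linarith

  refine ⟨part1, by rw [hsupsqrt]; exact part2, ?_⟩
  intro hirr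
  rw [hsupsqrt, hsupR]
  constructor
  · intro hKeq
    -- M is positive, since B is irreducible (hence nonzero)
    have hMpos : 0 < M := by
      rcases eq_or_lt_of_le hM0 with hM | hM
      · exfalso
        have hb0 : ∀ i j, b i j = 0 := by
          intro i j
          have hRi : (∑ j, b i j ^ 2) = 0 := le_antisymm (hM ▸ hi0 i) (hRnn i)
          have := (Finset.sum_eq_zero_iff_of_nonneg
            (fun j _ => sq_nonneg (b i j))).mp hRi j (Finset.mem_univ j)
          exact pow_eq_zero_iff (n := 2) (by norm_num) |>.mp this
        have hB0 : B = 0 := by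
          rw [hB]; ext i j; simp [hb0]
        obtain ⟨k, hk1, hkpos⟩ := hirr (Classical.arbitrary (Fin d)) (Classical.arbitrary (Fin d))
        rw [hB0, zero_pow (Nat.one_le_iff_ne_zero.mp hk1)] at hkpos
        simp at hkpos
      · exact hM
    set s : ℝ := Real.sqrt M with hsdef
    have hs : 0 < s := Real.sqrt_pos.mpr hMpos
    have hs2 : s ^ 2 = M := Real.sq_sqrt hM0
    -- obtain a maximizer of F on the standard simplex
    have hFcont : Continuous fun w : Fin d → ℝ =>
        ∑ i, Real.sqrt (w i * ∑ j, b i j ^ 2 * w j) :=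
      continuous_finset_sum _ fun i _ => Real.continuous_sqrt.comp
        ((continuous_apply i).mul (continuous_finset_sum _ fun j _ =>
          continuous_const.mul (continuous_apply j)))
    have hdne : (d:ℝ) ≠ 0 := by
      have : 0 < d := hd
      exact_mod_cast this.ne'
    have humem : (fun _ : Fin d => (d:ℝ)⁻¹) ∈ stdSimplex ℝ (Fin d) := by
      constructor
      · intro i; positivity
      · rw [Finset.sum_const, Finset.card_univ, Fintype.card_fin, nsmul_eq_mul]
        field_simp
    obtain ⟨w, hwmem, hwmax⟩ := (isCompact_stdSimplex ℝ (Fin d)).exists_isMaxOn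
      ⟨_, humem⟩ hFcont.continuousOn
    have hwnn : ∀ i, 0 ≤ w i := hwmem.1
    have hw1 : ∑ i, w i = 1 := hwmem.2
    have hsSupF : sSup SS = ∑ i, Real.sqrt (w i * ∑ j, b i j ^ 2 * w j) := by
      refine le_antisymm (csSup_le hSS_ne ?_) (le_csSup hSS_bdd ⟨w, hwnn, hw1, rfl⟩)
      rintro y ⟨v, hv, hv1, rfl⟩
      exact isMaxOn_iff.mp hwmax v ⟨hv, hv1⟩
    have hFw : ∑ i, Real.sqrt (w i * ∑ j, b i j ^ 2 * w j) = s := by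
      have h6 : 2 * sSup SS = 2 * s := by rw [← part1, hKeq, hsdef]
      rw [← hsSupF]; linarith
    set g : Fin d → ℝ := fun i => ∑ j, b i j ^ 2 * w j with hgdef
    have hgnn' : ∀ i, 0 ≤ g i := hgnn w hwnn
    have hsumg : ∑ i, g i = ∑ j, (∑ j', b j j' ^ 2) * w j := by
      rw [hgdef]
      simp only
      rw [Finset.sum_comm]
      refine Finset.sum_congr rfl fun j _ => ?_
      rw [Finset.sum_mul]
      refine Finset.sum_congr rfl fun i _ => by rw [hbsymm j i]
    have hgleM : ∑ i, g i ≤ M := by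
      rw [hsumg]
      calc ∑ j, (∑ j', b j j' ^ 2) * w j ≤ ∑ j, M * w j :=
            Finset.sum_le_sum fun j _ => mul_le_mul_of_nonneg_right (hi0 j) (hwnn j)
        _ = M := by rw [← Finset.mul_sum, hw1, mul_one]
    have hprod : ∀ i, w i * g i = (s * w i) * (g i / s) := by
      intro i; field_simp
    have hterm : ∀ i, 2 * Real.sqrt (w i * g i) ≤ s * w i + g i / s := by
      intro i
      rw [hprod i]
      exact amgm (mul_nonneg hs.le (hwnn i)) (div_nonneg (hgnn' i) hs.le)
    have hsum_terms : ∑ i, (s * w i + g i / s) = s + (∑ i, g i) / s := by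
      rw [Finset.sum_add_distrib, ← Finset.mul_sum, hw1, mul_one, ← Finset.sum_div]
    have hMs : M / s = s := by
      rw [← hs2]; field_simp
    have hFw' : ∑ i, Real.sqrt (w i * g i) = s := hFw
    have hsum_le : ∑ i, (s * w i + g i / s) ≤ ∑ i, 2 * Real.sqrt (w i * g i) := by
      rw [← Finset.mul_sum, hFw', hsum_terms]
      have h7 : (∑ i, g i) / s ≤ M / s := (div_le_div_iff_of_pos_right hs).mpr hgleM
      linarith [hMs]
    -- each AM-GM inequality is an equality, and ∑ g = M
    have hdiff0 : ∀ i ∈ Finset.univ, s * w i + g i / s - 2 * Real.sqrt (w i * g i) = 0 := by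
      have hsum0 : ∑ i, (s * w i + g i / s - 2 * Real.sqrt (w i * g i)) = 0 := by
        have hle : ∑ i, (s * w i + g i / s - 2 * Real.sqrt (w i * g i)) ≤ 0 := by
          rw [Finset.sum_sub_distrib]
          have h20 : ∑ i, 2 * Real.sqrt (w i * g i) = 2 * ∑ i, Real.sqrt (w i * g i) :=
            (Finset.mul_sum _ _ _).symm
          linarith [hsum_le]
        have hge : 0 ≤ ∑ i, (s * w i + g i / s - 2 * Real.sqrt (w i * g i)) :=
          Finset.sum_nonneg fun i _ => by linarith [hterm i]
        linarith
      intro i hi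
      exact (Finset.sum_eq_zero_iff_of_nonneg fun i _ => by linarith [hterm i]).mp hsum0 i hi
    have hgsum_eq : ∑ i, g i = M := by
      have h8 : ∑ i, (s * w i + g i / s) = ∑ i, 2 * Real.sqrt (w i * g i) := by
        refine Finset.sum_congr rfl fun i hi => ?_
        have := hdiff0 i hi; linarith
      rw [hsum_terms, ← Finset.mul_sum, hFw'] at h8
      have h9 : (∑ i, g i) / s = s := by linarith
      have h10 : (∑ i, g i) / s * s = ∑ i, g i := div_mul_cancel₀ _ hs.ne'
      rw [h9] at h10
      rw [← h10, ← hs2]; ring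
    have heig : ∀ i, g i = M * w i := by
      intro i
      have h9 : (s * w i) + (g i / s) = 2 * Real.sqrt ((s * w i) * (g i / s)) := by
        rw [← hprod i]
        have := hdiff0 i (Finset.mem_univ i); linarith
      have h10 : s * w i = g i / s :=
        amgm_eq (mul_nonneg hs.le (hwnn i)) (div_nonneg (hgnn' i) hs.le) h9
      have : g i = s * w i * s := by
        rw [h10]; field_simp
      rw [this, ← hs2]; ring
    -- each (M - R j) * w j = 0
    have hRw : ∀ j, (M - ∑ j', b j j' ^ 2) * w j = 0 := by
      have hsum0 : ∑ j, (M - ∑ j', b j j' ^ 2) * w j = 0 := by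
        have : ∑ j, (M - ∑ j', b j j' ^ 2) * w j
            = M * ∑ j, w j - ∑ j, (∑ j', b j j' ^ 2) * w j := by
          rw [Finset.mul_sum, ← Finset.sum_sub_distrib]
          exact Finset.sum_congr rfl fun j _ => by ring
        rw [this, hw1, mul_one, ← hsumg, hgsum_eq]
        ring
      intro j
      exact (Finset.sum_eq_zero_iff_of_nonneg fun j _ =>
        mul_nonneg (by linarith [hi0 j]) (hwnn j)).mp hsum0 j (Finset.mem_univ j)
    -- positivity of w via irreducibility
    have hj0 : ∃ j0, 0 < w j0 := by
      by_contra hc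
      push_neg at hc
      have : ∑ i, w i = 0 := Finset.sum_eq_zero fun i _ => le_antisymm (hc i) (hwnn i)
      rw [hw1] at this
      norm_num at this
    obtain ⟨j0, hj0⟩ := hj0
    have hBnn : ∀ i j, 0 ≤ B i j := by
      intro i j; rw [hB]; exact sq_nonneg _
    have hBw : ∀ i, ∑ j, B i j * w j = M * w i := by
      intro i
      have : ∀ j, B i j = b i j ^ 2 := fun j => by rw [hB]; rfl
      simp_rw [this]
      exact heig i
    have hwpos : ∀ i, 0 < w i := by
      intro i
      obtain ⟨k, hk1, hkpos⟩ := hirr i j0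
      have hkeig := matpow_eig B w M hBw k i
      have hle' : (B ^ k) i j0 * w j0 ≤ ∑ l, (B ^ k) i l * w l :=
        Finset.single_le_sum (fun l _ => mul_nonneg (matpow_nonneg B hBnn k i l) (hwnn l))
          (Finset.mem_univ j0)
      rw [hkeig] at hle'
      have hMk : 0 < M ^ k := pow_pos hMpos k
      nlinarith [mul_pos hkpos hj0]
    have hallR : ∀ j, (∑ j', b j j' ^ 2) = M := by
      intro j
      have := hRw j
      rcases mul_eq_zero.mp this with h | h
      · linarith
      · exact absurd h (hwpos j).ne'
    refine le_antisymm (le_ciInf fun i => (hallR i).ge) ?_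
    calc (⨅ i, ∑ j, b i j ^ 2)
        ≤ ∑ j, b i0 j ^ 2 := ciInf_le (f := fun i => ∑ j, b i j ^ 2)
          (Set.Finite.bddBelow (Set.finite_range _)) i0
      _ = M := by rw [hMdef]

  · intro heq
    have hall : ∀ i, (∑ j, b i j ^ 2) = M := by
      intro i
      have h2' : M ≤ ∑ j, b i j ^ 2 := by
        calc M = ⨅ i, ∑ j, b i j ^ 2 := heq
          _ ≤ ∑ j, b i j ^ 2 :=
            ciInf_le (f := fun i => ∑ j, b i j ^ 2)
              (Set.Finite.bddBelow (Set.finite_range _)) i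
      exact le_antisymm (hi0 i) h2'
    have hdne : (d:ℝ) ≠ 0 := by
      have : 0 < d := hd
      exact_mod_cast this.ne'
    have huval : ∑ i, Real.sqrt ((fun _ : Fin d => (d:ℝ)⁻¹) i
        * ∑ j, b i j ^ 2 * (fun _ : Fin d => (d:ℝ)⁻¹) j) = Real.sqrt M := by
      simp only
      have hterm : ∀ i : Fin d, Real.sqrt ((d:ℝ)⁻¹ * ∑ j, b i j ^ 2 * (d:ℝ)⁻¹)
          = Real.sqrt M * (d:ℝ)⁻¹ := by
        intro i
        have hin : ∑ j, b i j ^ 2 * (d:ℝ)⁻¹ = M * (d:ℝ)⁻¹ := by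
          rw [← Finset.sum_mul, hall i]
        rw [hin]
        have : (d:ℝ)⁻¹ * (M * (d:ℝ)⁻¹) = (Real.sqrt M * (d:ℝ)⁻¹) ^ 2 := by
          rw [mul_pow, Real.sq_sqrt hM0]; ring
        rw [this, Real.sqrt_sq (by positivity)]
      simp_rw [hterm]
      rw [Finset.sum_const, Finset.card_univ, Fintype.card_fin, nsmul_eq_mul]
      field_simp
    have humem : Real.sqrt M ∈ SS := by
      refine ⟨fun _ => (d:ℝ)⁻¹, fun i => by positivity, ?_, huval.symm⟩
    -- sum of uniform weights is 1
      rw [Finset.sum_const, Finset.card_univ, Fintype.card_fin, nsmul_eq_mul]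
      field_simp
    have hge : 2 * Real.sqrt M ≤ K := by
      have : Real.sqrt M ≤ sSup SS := le_csSup hSS_bdd humem
      linarith [hgeS]
    exact le_antisymm part2 hge
end
end
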